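/- For every integer L ≥ 2, the logarithm of the multinomial NML regret is subadditive in the sample size: for all nonnegative integers a and b, R(L, a + b) ≤ R(L, a) · R(L, b). -/

import Mathlib

open Finset

/-- The multinomial NML regret `R(L, n)`: the sum over all count vectors
`(h_1, …, h_L)` with `h_1 + ⋯ + h_L = n` of the maximum likelihood
`(n! / (h_1! ⋯ h_L!)) · ∏_v (h_v / n)^{h_v}` (with the convention `0^0 = 1`). -/
noncomputable def regret (L n : ℕ) : ℝ :=
  ∑ h ∈ Finset.Nat.antidiagonalTuple L n,
    (Nat.multinomial Finset.univ h : ℝ) * ∏ v, ((h v : ℝ) / (n : ℝ)) ^ (h v)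

/-- For `L ≥ 2`, the logarithm of the multinomial NML regret is subadditive in
the sample size: `R(L, a + b) ≤ R(L, a) · R(L, b)` for all `a, b : ℕ`. -/
lemma gibbs (L a : ℕ) (ha : 0 < a) (g : Fin L → ℕ) (hg : ∑ v, g v = a)
    (q : Fin L → ℝ) (hq0 : ∀ v, 0 ≤ q v) (hq1 : ∑ v, q v ≤ 1) :
    ∏ v, q v ^ g v ≤ ∏ v, ((g v : ℝ) / a) ^ g v := by
  have haR : (0:ℝ) < a := by exact_mod_cast ha
  set z : Fin L → ℝ := fun v => if g v = 0 then 1 else q v * a / g v with hz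
  set w : Fin L → ℝ := fun v => (g v : ℝ) / a with hwdef
  have hz0 : ∀ v, 0 ≤ z v := by
    intro v; simp only [hz]
    split
    · norm_num
    · exact div_nonneg (mul_nonneg (hq0 v) haR.le) (Nat.cast_nonneg _)
  have hw1 : ∑ v, w v = 1 := by
    simp only [hwdef, ← Finset.sum_div]
    rw [show (∑ v, (g v : ℝ)) = (a : ℝ) by exact_mod_cast congrArg Nat.cast hg]
    field_simp
  have key : ∏ v, z v ^ (w v) ≤ 1 := by
    refine le_trans (Real.geom_mean_le_arith_mean_weighted univ w z
      (fun v _ => by positivity) hw1 (fun v _ => hz0 v)) ?_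
    refine le_trans (Finset.sum_le_sum (fun v _ => ?_)) hq1
    simp only [hz, hwdef]
    split
    · next h0 => simp [h0, hq0 v]
    · next h0 =>
      have hgv : (g v : ℝ) ≠ 0 := by exact_mod_cast h0
      exact le_of_eq (by field_simp)
  have key2 : ∏ v, z v ^ (g v) ≤ 1 := by
    have h1 : ∏ v, z v ^ (g v) = (∏ v, z v ^ (w v)) ^ a := by
      rw [← Finset.prod_pow]
      refine Finset.prod_congr rfl (fun v _ => ?_)
      rw [← Real.rpow_natCast (z v ^ w v) a, ← Real.rpow_natCast (z v) (g v),
        ← Real.rpow_mul (hz0 v)]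
      congr 1
      simp only [hwdef]
      field_simp
    rw [h1]
    exact pow_le_one₀ (Finset.prod_nonneg fun v _ => Real.rpow_nonneg (hz0 v) _) key
  have hsplit : ∏ v, q v ^ g v = (∏ v, ((g v : ℝ) / a) ^ g v) * ∏ v, z v ^ g v := by
    rw [← Finset.prod_mul_distrib]
    refine Finset.prod_congr rfl (fun v _ => ?_)
    simp only [hz]
    split
    · next h0 => simp [h0]
    · next h0 =>
      rw [← mul_pow]
      congr 1
      have : (g v : ℝ) ≠ 0 := by exact_mod_cast h0
      field_simp
  rw [hsplit]
  calc (∏ v, ((g v : ℝ) / a) ^ g v) * ∏ v, z v ^ g v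
      ≤ (∏ v, ((g v : ℝ) / a) ^ g v) * 1 := by
        refine mul_le_mul_of_nonneg_left key2 (Finset.prod_nonneg fun v _ => by positivity)
    _ = _ := mul_one _

lemma mle_mul (L a b : ℕ) (g g' : Fin L → ℕ) (hg : ∑ v, g v = a) (hg' : ∑ v, g' v = b) :
    ∏ v, (((g v + g' v : ℕ) : ℝ) / ((a + b : ℕ) : ℝ)) ^ (g v + g' v) ≤
      (∏ v, ((g v : ℝ) / a) ^ g v) * ∏ v, ((g' v : ℝ) / b) ^ g' v := by
  rcases Nat.eq_zero_or_pos a with ha | ha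
  · subst ha
    have hg0 : ∀ v, g v = 0 := fun v => by simpa using (Finset.sum_eq_zero_iff.mp hg) v (mem_univ v)
    refine le_of_eq ?_
    rw [show (∏ v, ((g v : ℝ) / (0:ℕ)) ^ g v) = 1 from
      Finset.prod_eq_one (fun v _ => by rw [hg0 v]; simp), one_mul]
    exact Finset.prod_congr rfl (fun v _ => by rw [hg0 v]; norm_num)
  rcases Nat.eq_zero_or_pos b with hb | hb
  · subst hb
    have hg0 : ∀ v, g' v = 0 := fun v => by simpa using (Finset.sum_eq_zero_iff.mp hg') v (mem_univ v)
    refine le_of_eq ?_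
    rw [show (∏ v, ((g' v : ℝ) / (0:ℕ)) ^ g' v) = 1 from
      Finset.prod_eq_one (fun v _ => by rw [hg0 v]; simp), mul_one]
    exact Finset.prod_congr rfl (fun v _ => by rw [hg0 v]; norm_num)
  set q : Fin L → ℝ := fun v => ((g v + g' v : ℕ) : ℝ) / ((a + b : ℕ) : ℝ) with hqdef
  have hq0 : ∀ v, 0 ≤ q v := fun v => by positivity
  have hq1 : ∑ v, q v ≤ 1 := by
    refine le_of_eq ?_
    simp only [hqdef, ← Finset.sum_div]
    rw [show (∑ v, ((g v + g' v : ℕ) : ℝ)) = ((a + b : ℕ) : ℝ) by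
      push_cast [← hg, ← hg']
      exact Finset.sum_add_distrib]
    have : ((a + b : ℕ) : ℝ) ≠ 0 := by positivity
    field_simp
  have hsplit : ∏ v, q v ^ (g v + g' v) = (∏ v, q v ^ g v) * ∏ v, q v ^ g' v := by
    rw [← Finset.prod_mul_distrib]
    exact Finset.prod_congr rfl (fun v _ => pow_add _ _ _)
  calc ∏ v, q v ^ (g v + g' v) = (∏ v, q v ^ g v) * ∏ v, q v ^ g' v := hsplit
    _ ≤ (∏ v, ((g v : ℝ) / a) ^ g v) * ∏ v, ((g' v : ℝ) / b) ^ g' v := by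
        refine mul_le_mul (gibbs L a ha g hg q hq0 hq1) (gibbs L b hb g' hg' q hq0 hq1)
          (Finset.prod_nonneg fun v _ => pow_nonneg (hq0 v) _)
          (Finset.prod_nonneg fun v _ => by positivity)

lemma coeff_sum_X_pow (L n : ℕ) (k : Fin L →₀ ℕ) :
    MvPolynomial.coeff k ((∑ v, MvPolynomial.X v : MvPolynomial (Fin L) ℕ) ^ n)
      = if ∑ v, k v = n then Nat.multinomial univ ⇑k else 0 := by
  rw [Finset.sum_pow_eq_sum_piAntidiag, MvPolynomial.coeff_sum]
  have hmon : ∀ f : Fin L → ℕ, (∏ i, (MvPolynomial.X i : MvPolynomial (Fin L) ℕ) ^ f i)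
      = MvPolynomial.monomial (Finsupp.equivFunOnFinite.symm f) 1 := by
    intro f
    rw [← MvPolynomial.prod_X_pow_eq_monomial]
    refine (Finset.prod_subset (Finset.subset_univ _) ?_).symm
    intro x _ hx
    have : f x = 0 := by
      by_contra h
      exact hx (Finsupp.mem_support_iff.mpr (by simpa using h))
    simp [Finsupp.equivFunOnFinite, this]
  have hterm : ∀ f : Fin L → ℕ,
      MvPolynomial.coeff k ((Nat.multinomial univ f : MvPolynomial (Fin L) ℕ) *
        ∏ i, MvPolynomial.X i ^ f i)
      = Nat.multinomial univ f * (if f = ⇑k then 1 else 0) := by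
    intro f
    rw [hmon f, ← MvPolynomial.C_eq_coe_nat, MvPolynomial.coeff_C_mul,
      MvPolynomial.coeff_monomial]
    congr 1
    have : Finsupp.equivFunOnFinite.symm f = k ↔ f = ⇑k :=
      Equiv.symm_apply_eq _
    simp only [this]
  simp only [hterm]
  split
  · next hsum =>
    rw [Finset.sum_eq_single (⇑k)]
    · simp
    · intro f _ hf
      simp [hf]
    · intro hk
      exfalso
      exact hk (by simp [Finset.mem_piAntidiag, hsum])
  · next hsum =>
    refine Finset.sum_eq_zero (fun f hf => ?_)
    rw [Finset.mem_piAntidiag] at hf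
    have : f ≠ ⇑k := fun he => hsum (by rw [← hf.1, he])
    rw [if_neg this, mul_zero]

lemma vandermonde (L a b : ℕ) (h : Fin L → ℕ) (hh : ∑ v, h v = a + b) :
    Nat.multinomial univ h =
      ∑ p ∈ (Finset.Nat.antidiagonalTuple L a ×ˢ Finset.Nat.antidiagonalTuple L b).filter
        (fun p => p.1 + p.2 = h), Nat.multinomial univ p.1 * Nat.multinomial univ p.2 := by
  set K : Fin L →₀ ℕ := Finsupp.equivFunOnFinite.symm h with hKdef
  have hKcoe : ⇑K = h := rfl
  have hKsum : ∑ v, K v = a + b := by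
    simp only [hKdef, Finsupp.coe_equivFunOnFinite_symm]
    exact hh
  let P : MvPolynomial (Fin L) ℕ := ∑ v, MvPolynomial.X v
  have h1 : MvPolynomial.coeff K (P ^ (a + b)) = Nat.multinomial univ h := by
    rw [coeff_sum_X_pow]
    simp [hKcoe, hh]
  have h2 : MvPolynomial.coeff K (P ^ (a + b)) =
      ∑ x ∈ Finset.HasAntidiagonal.antidiagonal K,
        (if ∑ v, x.1 v = a then Nat.multinomial univ ⇑x.1 else 0) *
        (if ∑ v, x.2 v = b then Nat.multinomial univ ⇑x.2 else 0) := by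
    show MvPolynomial.coeff K ((∑ v, MvPolynomial.X v : MvPolynomial (Fin L) ℕ) ^ (a + b)) = _
    rw [pow_add, MvPolynomial.coeff_mul]
    simp only [coeff_sum_X_pow]
  have hsum2 : ∀ x ∈ Finset.HasAntidiagonal.antidiagonal K, ∑ v, x.1 v = a → ∑ v, x.2 v = b := by
    intro x hx h1x
    rw [Finset.HasAntidiagonal.mem_antidiagonal] at hx
    have : ∑ v, (x.1 v + x.2 v) = a + b := by
      rw [← hKsum]
      refine Finset.sum_congr rfl (fun v _ => ?_)
      rw [← hx]
      rfl
    rw [Finset.sum_add_distrib, h1x] at this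
    omega
  have h3 : (∑ x ∈ Finset.HasAntidiagonal.antidiagonal K,
        (if ∑ v, x.1 v = a then Nat.multinomial univ ⇑x.1 else 0) *
        (if ∑ v, x.2 v = b then Nat.multinomial univ ⇑x.2 else 0)) =
      ∑ x ∈ (Finset.HasAntidiagonal.antidiagonal K).filter (fun x => ∑ v, x.1 v = a),
        Nat.multinomial univ ⇑x.1 * Nat.multinomial univ ⇑x.2 := by
    rw [Finset.sum_filter]
    refine Finset.sum_congr rfl (fun x hx => ?_)
    by_cases h1x : ∑ v, x.1 v = a
    · simp [h1x, hsum2 x hx h1x]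
    · simp [h1x]
  have h4 : (∑ x ∈ (Finset.HasAntidiagonal.antidiagonal K).filter (fun x => ∑ v, x.1 v = a),
        Nat.multinomial univ ⇑x.1 * Nat.multinomial univ ⇑x.2) =
      ∑ p ∈ (Finset.Nat.antidiagonalTuple L a ×ˢ Finset.Nat.antidiagonalTuple L b).filter
        (fun p => p.1 + p.2 = h), Nat.multinomial univ p.1 * Nat.multinomial univ p.2 := by
    refine Finset.sum_nbij' (fun x => (⇑x.1, ⇑x.2))
      (fun p => (Finsupp.equivFunOnFinite.symm p.1, Finsupp.equivFunOnFinite.symm p.2))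
      ?_ ?_ ?_ ?_ ?_
    · intro x hx
      rw [Finset.mem_filter, Finset.HasAntidiagonal.mem_antidiagonal] at hx
      obtain ⟨hx1, hx2⟩ := hx
      rw [Finset.mem_filter, Finset.mem_product, Finset.Nat.mem_antidiagonalTuple,
        Finset.Nat.mem_antidiagonalTuple]
      refine ⟨⟨hx2, hsum2 x (Finset.HasAntidiagonal.mem_antidiagonal.mpr hx1) hx2⟩, ?_⟩
      have := congrArg (fun f : Fin L →₀ ℕ => ⇑f) hx1
      simpa [hKcoe] using this
    · intro p hp
      rw [Finset.mem_filter, Finset.mem_product, Finset.Nat.mem_antidiagonalTuple,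
        Finset.Nat.mem_antidiagonalTuple] at hp
      obtain ⟨⟨hp1, hp2⟩, hp3⟩ := hp
      rw [Finset.mem_filter, Finset.HasAntidiagonal.mem_antidiagonal]
      constructor
      · ext v
        have := congrFun hp3 v
        simpa [hKcoe] using this
      · simpa using hp1
    · intro x _
      simp
    · intro p _
      exact Prod.ext (Finsupp.equivFunOnFinite.apply_symm_apply p.1)
        (Finsupp.equivFunOnFinite.apply_symm_apply p.2)
    · intro x _
      rfl
  rw [← h4, ← h3, ← h2, h1]

theorem regret_subadditive (L : ℕ) (hL : 2 ≤ L) (a b : ℕ) :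
    regret L (a + b) ≤ regret L a * regret L b := by
  classical
  set Φ : (Fin L → ℕ) × (Fin L → ℕ) → ℝ :=
    fun p => ∏ v, (((p.1 v + p.2 v : ℕ) : ℝ) / ((a + b : ℕ) : ℝ)) ^ (p.1 v + p.2 v) with hΦ
  have step1 : regret L (a + b) =
      ∑ h ∈ Finset.Nat.antidiagonalTuple L (a + b),
        ∑ p ∈ (Finset.Nat.antidiagonalTuple L a ×ˢ Finset.Nat.antidiagonalTuple L b).filter
          (fun p => p.1 + p.2 = h),
          (Nat.multinomial univ p.1 : ℝ) * (Nat.multinomial univ p.2 : ℝ) * Φ p := by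
    rw [regret]
    refine Finset.sum_congr rfl (fun h hmem => ?_)
    rw [Finset.Nat.mem_antidiagonalTuple] at hmem
    rw [vandermonde L a b h hmem]
    push_cast
    rw [Finset.sum_mul]
    refine Finset.sum_congr rfl (fun p hp => ?_)
    rw [Finset.mem_filter] at hp
    rw [← hp.2]
    simp only [hΦ, Pi.add_apply]
    norm_cast
  have step2 : regret L (a + b) =
      ∑ p ∈ Finset.Nat.antidiagonalTuple L a ×ˢ Finset.Nat.antidiagonalTuple L b,
        (Nat.multinomial univ p.1 : ℝ) * (Nat.multinomial univ p.2 : ℝ) * Φ p := by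
    rw [step1]
    refine Finset.sum_fiberwise_of_maps_to (fun p hp => ?_) _
    rw [Finset.mem_product, Finset.Nat.mem_antidiagonalTuple,
      Finset.Nat.mem_antidiagonalTuple] at hp
    rw [Finset.Nat.mem_antidiagonalTuple]
    simp only [Pi.add_apply]
    rw [Finset.sum_add_distrib, hp.1, hp.2]
  rw [step2]
  have step3 : ∀ p ∈ Finset.Nat.antidiagonalTuple L a ×ˢ Finset.Nat.antidiagonalTuple L b,
      (Nat.multinomial univ p.1 : ℝ) * (Nat.multinomial univ p.2 : ℝ) * Φ p ≤
        ((Nat.multinomial univ p.1 : ℝ) * ∏ v, ((p.1 v : ℝ) / (a : ℝ)) ^ (p.1 v)) *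
        ((Nat.multinomial univ p.2 : ℝ) * ∏ v, ((p.2 v : ℝ) / (b : ℝ)) ^ (p.2 v)) := by
    intro p hp
    rw [Finset.mem_product, Finset.Nat.mem_antidiagonalTuple,
      Finset.Nat.mem_antidiagonalTuple] at hp
    have key := mle_mul L a b p.1 p.2 hp.1 hp.2
    calc (Nat.multinomial univ p.1 : ℝ) * (Nat.multinomial univ p.2 : ℝ) * Φ p
        ≤ (Nat.multinomial univ p.1 : ℝ) * (Nat.multinomial univ p.2 : ℝ) *
            ((∏ v, ((p.1 v : ℝ) / (a : ℝ)) ^ (p.1 v)) *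
             ∏ v, ((p.2 v : ℝ) / (b : ℝ)) ^ (p.2 v)) := by
          refine mul_le_mul_of_nonneg_left key (by positivity)
      _ = _ := by ring
  refine le_trans (Finset.sum_le_sum step3) (le_of_eq ?_)
  rw [regret, regret, Finset.sum_mul_sum, Finset.sum_product]
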